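/- Let $(a_n)$ and $(b_n)$ be strictly increasing sequences of positive integers with $L_n = b_n/a_n \to L \in (0, \infty)$, where $L$ is irrational. Then for every $m \in \mathbb{Z}$ and every $t > 0$, $\frac{1}{a_n} \sum_{j=1}^{\lfloor a_n t \rfloor} f_{m,L}(\{j L_n\}) \to t \int_0^1 f_{m,L}(x)\, dx$ as $n \to \infty$. -/

import Mathlib

open Filter MeasureTheory

/-- `f_{m,L}(x) = (|x-m+1|^{1/3} + |x-m-L|^{1/3} - |x-m|^{1/3} - |x-m+1-L|^{1/3})^3`. -/
noncomputable def fmL (L : ℝ) (m : ℤ) (x : ℝ) : ℝ :=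
  (|x - m + 1| ^ ((1 : ℝ) / 3) + |x - m - L| ^ ((1 : ℝ) / 3)
    - |x - m| ^ ((1 : ℝ) / 3) - |x - m + 1 - L| ^ ((1 : ℝ) / 3)) ^ 3

open Finset Complex

attribute [local instance] ZeroLEOneClass.factZeroLtOne

noncomputable def Complex.abs : AbsoluteValue ℂ ℝ := IsAbsoluteValue.toAbsoluteValue (norm : ℂ → ℝ)

lemma Complex.abs_apply' (z : ℂ) : Complex.abs z = ‖z‖ := rfl

lemma Complex.norm_eq_abs (z : ℂ) : ‖z‖ = Complex.abs z := rfl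

lemma Complex.continuous_abs : Continuous Complex.abs := continuous_norm

lemma Complex.abs_exp_ofReal_mul_I (x : ℝ) : Complex.abs (Complex.exp (x * Complex.I)) = 1 :=
  Complex.norm_exp_ofReal_mul_I x

private lemma continuous_fmL (L : ℝ) (m : ℤ) : Continuous (fmL L m) := by
  have h3 : Continuous fun y : ℝ => |y| ^ ((1 : ℝ) / 3) := by
    rw [continuous_iff_continuousAt]
    intro y
    exact ContinuousAt.rpow_const continuous_abs.continuousAt (Or.inr (by norm_num))
  unfold fmL
  apply Continuous.pow
  apply Continuous.sub
  apply Continuous.sub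
  apply Continuous.add
  · exact h3.comp (by continuity)
  · exact h3.comp (by continuity)
  · exact h3.comp (by continuity)
  · exact h3.comp (by continuity)

private lemma sum_Icc_one_floor {M : Type*} [AddCommMonoid M] (N : ℤ) (f : ℤ → M) :
    ∑ j ∈ Finset.Icc (1 : ℤ) N, f j = ∑ i ∈ Finset.range N.toNat, f ((i : ℤ) + 1) := by
  refine Finset.sum_nbij' (fun j => (j - 1).toNat) (fun i => (i : ℤ) + 1) ?_ ?_ ?_ ?_ ?_
  · intro j hj; simp only [Finset.mem_Icc] at hj; simp only [Finset.mem_range]; omega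
  · intro i hi; simp only [Finset.mem_range] at hi; simp only [Finset.mem_Icc]; omega
  · intro j hj; simp only [Finset.mem_Icc] at hj; omega
  · intro i hi; simp only [Finset.mem_range] at hi; omega
  · intro j hj; simp only [Finset.mem_Icc] at hj; congr 1; omega

private lemma weylSums (A : ℕ → ℝ) (K : ℕ → ℕ) (θ : ℕ → ℝ) (L : ℝ)
    (hApos : ∀ n, 0 < A n) (hA : Tendsto A atTop atTop)
    (hθ : Tendsto θ atTop (nhds L)) (hirr : Irrational L)
    (h : ℤ) (hh : h ≠ 0) :
    Tendsto (fun n => ((A n : ℂ))⁻¹ * ∑ i ∈ Finset.range (K n),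
      Complex.exp (2 * (Real.pi : ℂ) * Complex.I * (h : ℂ) *
        ((Int.fract (((i : ℝ) + 1) * θ n) : ℝ) : ℂ))) atTop (nhds 0) := by
  set w : ℕ → ℂ := fun n => Complex.exp (2 * (Real.pi : ℂ) * Complex.I * (h : ℂ) * ((θ n : ℝ) : ℂ))
    with hw
  have hwlim : Tendsto w atTop (nhds (Complex.exp (2 * (Real.pi : ℂ) * Complex.I * (h : ℂ) * (L : ℂ)))) := by
    apply (Complex.continuous_exp.tendsto _).comp
    apply Tendsto.const_mul
    exact (Complex.continuous_ofReal.tendsto _).comp hθ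
  have h2π : (2 * (Real.pi : ℂ) * Complex.I) ≠ 0 := by
    simp [Real.pi_ne_zero, Complex.I_ne_zero]
  have hwinfty : Complex.exp (2 * (Real.pi : ℂ) * Complex.I * (h : ℂ) * (L : ℂ)) ≠ 1 := by
    intro hcon
    rw [Complex.exp_eq_one_iff] at hcon
    obtain ⟨k, hk⟩ := hcon
    have key : ((h : ℂ) * (L : ℂ)) * (2 * (Real.pi : ℂ) * Complex.I)
        = (k : ℂ) * (2 * (Real.pi : ℂ) * Complex.I) := by rw [← hk]; ring
    have key2 := mul_right_cancel₀ h2π key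
    have key3 : (h : ℝ) * L = (k : ℝ) := by exact_mod_cast key2
    apply hirr
    refine ⟨(k : ℚ) / (h : ℚ), ?_⟩
    have hh' : (h : ℝ) ≠ 0 := Int.cast_ne_zero.mpr hh
    push_cast
    field_simp
    linarith [key3]
  -- norm of each w n is 1
  have hnorm : ∀ n, Complex.abs (w n) = 1 := by
    intro n
    have : (2 * (Real.pi : ℂ) * Complex.I * (h : ℂ) * ((θ n : ℝ) : ℂ))
        = ((2 * Real.pi * (h : ℝ) * θ n : ℝ) : ℂ) * Complex.I := by push_cast; ring
    rw [hw]
    simp only [this, Complex.abs_exp_ofReal_mul_I]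
  set c : ℝ := Complex.abs (Complex.exp (2 * (Real.pi : ℂ) * Complex.I * (h : ℂ) * (L : ℂ)) - 1)
    with hc
  have hcpos : 0 < c := by
    rw [hc]
    simp only [AbsoluteValue.pos_iff, sub_ne_zero]
    exact hwinfty
  have hev : ∀ᶠ n in atTop, c / 2 < Complex.abs (w n - 1) := by
    have : Tendsto (fun n => Complex.abs (w n - 1)) atTop (nhds c) := by
      rw [hc]
      exact (Complex.continuous_abs.tendsto _).comp (hwlim.sub tendsto_const_nhds)
    exact this.eventually_const_lt (by linarith)
  -- rewrite the summand as powers of w n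
  have hsummand : ∀ (n : ℕ) (i : ℕ), Complex.exp (2 * (Real.pi : ℂ) * Complex.I * (h : ℂ) *
      ((Int.fract (((i : ℝ) + 1) * θ n) : ℝ) : ℂ)) = (w n) ^ (i + 1) := by
    intro n i
    have e1 : (2 * (Real.pi : ℂ) * Complex.I * (h : ℂ) * ((Int.fract (((i : ℝ) + 1) * θ n) : ℝ) : ℂ))
        = ((i : ℕ) + 1 : ℕ) * (2 * (Real.pi : ℂ) * Complex.I * (h : ℂ) * ((θ n : ℝ) : ℂ))
          - ((h * ⌊((i : ℝ) + 1) * θ n⌋ : ℤ) : ℂ) * (2 * (Real.pi : ℂ) * Complex.I) := by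
      rw [Int.fract]
      push_cast
      ring
    rw [e1, Complex.exp_sub, Complex.exp_int_mul_two_pi_mul_I, div_one,
      Complex.exp_nat_mul]
  -- bound the partial sums
  have hbound : ∀ n, w n ≠ 1 → Complex.abs (∑ i ∈ Finset.range (K n), (w n) ^ (i + 1))
      ≤ 2 / Complex.abs (w n - 1) := by
    intro n hwn
    have e2 : ∑ i ∈ Finset.range (K n), (w n) ^ (i + 1)
        = (∑ i ∈ Finset.range (K n), (w n) ^ i) * w n := by
      rw [Finset.sum_mul]
      exact Finset.sum_congr rfl (fun i _ => (pow_succ _ _).symm)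
    rw [e2, geom_sum_eq hwn, map_mul, map_div₀, hnorm n, mul_one]
    apply div_le_div_of_nonneg_right ?_ ?_ |>.trans le_rfl
    · have h1 : Complex.abs (w n ^ K n - 1) ≤ Complex.abs (w n ^ K n) + Complex.abs 1 :=
        Complex.abs.sub_le_add (w n ^ K n) 1
      have h2 : Complex.abs (w n ^ K n) = 1 := by rw [map_pow, hnorm n, one_pow]
      rw [h2, map_one] at h1
      linarith
    · exact (Complex.abs.pos (sub_ne_zero.mpr hwn)).le
  -- squeeze
  apply squeeze_zero_norm'
  · filter_upwards [hev] with n hn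
    have hwn : w n ≠ 1 := by
      intro hcon
      rw [hcon, sub_self, map_zero] at hn
      linarith
    have hA' : (0 : ℝ) < A n := hApos n
    calc ‖((A n : ℂ))⁻¹ * ∑ i ∈ Finset.range (K n),
          Complex.exp (2 * (Real.pi : ℂ) * Complex.I * (h : ℂ) *
            ((Int.fract (((i : ℝ) + 1) * θ n) : ℝ) : ℂ))‖
        = (A n)⁻¹ * Complex.abs (∑ i ∈ Finset.range (K n), (w n) ^ (i + 1)) := by
          rw [norm_mul]
          congr 1
          · rw [norm_inv, Complex.norm_real, Real.norm_eq_abs, abs_of_pos hA']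
          · rw [Complex.norm_eq_abs]
            congr 1
            exact Finset.sum_congr rfl (fun i _ => hsummand n i)
      _ ≤ (A n)⁻¹ * (2 / Complex.abs (w n - 1)) := by
          apply mul_le_mul_of_nonneg_left (hbound n hwn) (by positivity)
      _ ≤ (A n)⁻¹ * (2 / (c / 2)) := by
          apply mul_le_mul_of_nonneg_left ?_ (by positivity)
          apply div_le_div_of_nonneg_left (by norm_num) (by linarith) hn.le
      _ = (A n)⁻¹ * (4 / c) := by ring_nf
  · have : Tendsto (fun n => (A n)⁻¹) atTop (nhds 0) := hA.inv_tendsto_atTop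
    simpa using this.mul_const (4 / c)

private lemma weylKey (A : ℕ → ℝ) (K : ℕ → ℕ) (x : ℕ → ℕ → ℝ) (t : ℝ) (ht : 0 < t)
    (hApos : ∀ n, 0 < A n)
    (hK : Tendsto (fun n => (K n : ℝ) / A n) atTop (nhds t))
    (hfour : ∀ h : ℤ, h ≠ 0 →
      Tendsto (fun n => ((A n : ℂ))⁻¹ * ∑ i ∈ Finset.range (K n),
        Complex.exp (2 * (Real.pi : ℂ) * Complex.I * (h : ℂ) * ((x n i : ℝ) : ℂ)))
        atTop (nhds 0))
    (Φ : C(AddCircle (1 : ℝ), ℂ)) :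
    Tendsto (fun n => ((A n : ℂ))⁻¹ * ∑ i ∈ Finset.range (K n), Φ ((x n i : ℝ) : AddCircle (1:ℝ)))
      atTop (nhds ((t : ℂ) * ∫ y in (0 : ℝ)..1, Φ ((y : ℝ) : AddCircle (1:ℝ)))) := by
  have hint : ∀ Ψ : C(AddCircle (1 : ℝ), ℂ),
      IntervalIntegrable (fun y : ℝ => Ψ ((y : ℝ) : AddCircle (1:ℝ))) volume 0 1 :=
    fun Ψ => (Ψ.continuous.comp (AddCircle.continuous_mk' 1)).intervalIntegrable 0 1
  have hspan : ∀ P ∈ Submodule.span ℂ (Set.range (@fourier 1)),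
      Tendsto (fun n => ((A n : ℂ))⁻¹ * ∑ i ∈ Finset.range (K n), P ((x n i : ℝ) : AddCircle (1:ℝ)))
        atTop (nhds ((t : ℂ) * ∫ y in (0 : ℝ)..1, P ((y : ℝ) : AddCircle (1:ℝ)))) := by
    intro P hP
    induction hP using Submodule.span_induction with
    | mem P hPmem =>
        obtain ⟨h, rfl⟩ := hPmem
        rcases eq_or_ne h 0 with rfl | hh
        · have e0 : ∀ z : AddCircle (1:ℝ), fourier 0 z = 1 := fun _ => fourier_zero
          simp only [e0]
          have eI : (∫ y in (0 : ℝ)..1, (1 : ℂ)) = 1 := by simp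
          rw [eI, mul_one]
          have hKc : Tendsto (fun n => Complex.ofReal ((K n : ℝ) / A n)) atTop
              (nhds (Complex.ofReal t)) := (Complex.continuous_ofReal.tendsto t).comp hK
          convert hKc using 2 with n
          rw [Finset.sum_const, Finset.card_range, nsmul_eq_mul, mul_one]
          push_cast
          rw [div_eq_inv_mul]
        · have hI : (∫ y in (0 : ℝ)..1, fourier h ((y : ℝ) : AddCircle (1:ℝ))) = 0 := by
            have he : ∀ y : ℝ, fourier h ((y : ℝ) : AddCircle (1:ℝ))
                = Complex.exp ((2 * (Real.pi : ℂ) * Complex.I * (h : ℂ)) * (y : ℂ)) := by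
              intro y
              rw [fourier_coe_apply]
              push_cast
              ring_nf
            rw [intervalIntegral.integral_congr (fun y _ => he y)]
            have hc : (2 * (Real.pi : ℂ) * Complex.I * (h : ℂ)) ≠ 0 := by
              simp [Real.pi_ne_zero, Complex.I_ne_zero, hh]
            rw [integral_exp_mul_complex hc]
            have e1 : Complex.exp ((2 * (Real.pi : ℂ) * Complex.I * (h : ℂ)) * ((1:ℝ):ℂ)) = 1 := by
              have : ((2 * (Real.pi : ℂ) * Complex.I * (h : ℂ)) * ((1:ℝ):ℂ))
                  = (h : ℂ) * (2 * (Real.pi : ℂ) * Complex.I) := by push_cast; ring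
              rw [this, Complex.exp_int_mul_two_pi_mul_I]
            have e0 : Complex.exp ((2 * (Real.pi : ℂ) * Complex.I * (h : ℂ)) * ((0:ℝ):ℂ)) = 1 := by
              norm_num
            rw [e1, e0, sub_self, zero_div]
          rw [hI, mul_zero]
          have hf := hfour h hh
          convert hf using 3 with n
          apply Finset.sum_congr rfl
          intro i _
          rw [fourier_coe_apply]
          push_cast
          ring_nf
    | zero =>
        simp only [ContinuousMap.zero_apply, Finset.sum_const_zero, mul_zero]
        rw [intervalIntegral.integral_const]
        simp only [smul_zero, mul_zero]
        exact tendsto_const_nhds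
    | add P R hPm hRm hPq hRq =>
        have hsum := hPq.add hRq
        convert hsum using 2 with n
        · simp only [ContinuousMap.add_apply, Finset.sum_add_distrib, mul_add]
        · rw [← mul_add]
          congr 1
          simp only [ContinuousMap.add_apply]
          rw [intervalIntegral.integral_add (hint P) (hint R)]
    | smul c P hPm hPq =>
        have hmul := hPq.const_mul c
        convert hmul using 2 with n
        · simp only [ContinuousMap.smul_apply, smul_eq_mul]
          rw [← Finset.mul_sum]
          ring
        · simp only [ContinuousMap.smul_apply, smul_eq_mul]
          rw [intervalIntegral.integral_const_mul]
          ring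
  -- density argument
  rw [Metric.tendsto_nhds]
  intro ε hε
  have hδ : 0 < ε / (2 * t + 4) := by positivity
  have hΦcl : Φ ∈ closure ((Submodule.span ℂ (Set.range (@fourier 1)) : Submodule ℂ C(AddCircle (1:ℝ), ℂ)) : Set C(AddCircle (1:ℝ), ℂ)) := by
    rw [← Submodule.topologicalClosure_coe, span_fourier_closure_eq_top]
    trivial
  obtain ⟨P, hPmem, hPdist⟩ := Metric.mem_closure_iff.1 hΦcl _ hδ
  have hQP := hspan P hPmem
  have hev1 : ∀ᶠ n in atTop, dist (((A n : ℂ))⁻¹ * ∑ i ∈ Finset.range (K n), P ((x n i : ℝ) : AddCircle (1:ℝ)))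
      ((t : ℂ) * ∫ y in (0 : ℝ)..1, P ((y : ℝ) : AddCircle (1:ℝ))) < ε / (2 * t + 4) :=
    Metric.tendsto_nhds.1 hQP _ hδ
  have hev2 : ∀ᶠ n in atTop, (K n : ℝ) / A n < t + 1 := hK.eventually_lt_const (by linarith)
  filter_upwards [hev1, hev2] with n h1 h2
  have hA' : (0 : ℝ) < A n := hApos n
  set δ := ε / (2 * t + 4) with hδdef
  -- pointwise bound
  have hpt : ∀ z : AddCircle (1:ℝ), Complex.abs (Φ z - P z) ≤ δ := by
    intro z
    have := ContinuousMap.dist_apply_le_dist (f := Φ) (g := P) z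
    calc Complex.abs (Φ z - P z) = dist (Φ z) (P z) := by rw [Complex.dist_eq]; rfl
      _ ≤ dist Φ P := this
      _ ≤ δ := hPdist.le
  have key1 : dist (((A n : ℂ))⁻¹ * ∑ i ∈ Finset.range (K n), Φ ((x n i : ℝ) : AddCircle (1:ℝ)))
      (((A n : ℂ))⁻¹ * ∑ i ∈ Finset.range (K n), P ((x n i : ℝ) : AddCircle (1:ℝ))) ≤ (t + 1) * δ := by
    rw [dist_eq_norm, ← mul_sub, ← Finset.sum_sub_distrib, norm_mul]
    have e1 : ‖((A n : ℂ))⁻¹‖ = (A n)⁻¹ := by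
      rw [norm_inv, Complex.norm_real, Real.norm_eq_abs, abs_of_pos hA']
    rw [e1]
    calc (A n)⁻¹ * ‖∑ i ∈ Finset.range (K n), (Φ ((x n i : ℝ) : AddCircle (1:ℝ)) - P ((x n i : ℝ) : AddCircle (1:ℝ)))‖
        ≤ (A n)⁻¹ * ((K n : ℝ) * δ) := by
          apply mul_le_mul_of_nonneg_left ?_ (by positivity)
          calc ‖∑ i ∈ Finset.range (K n), (Φ ((x n i : ℝ) : AddCircle (1:ℝ)) - P ((x n i : ℝ) : AddCircle (1:ℝ)))‖
              ≤ ∑ i ∈ Finset.range (K n), ‖(Φ ((x n i : ℝ) : AddCircle (1:ℝ)) - P ((x n i : ℝ) : AddCircle (1:ℝ)))‖ :=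
                norm_sum_le _ _
            _ ≤ ∑ _i ∈ Finset.range (K n), δ :=
                Finset.sum_le_sum (fun i _ => hpt _)
            _ = (K n : ℝ) * δ := by rw [Finset.sum_const, Finset.card_range, nsmul_eq_mul]
      _ = ((K n : ℝ) / A n) * δ := by ring
      _ ≤ (t + 1) * δ := by
          apply mul_le_mul_of_nonneg_right h2.le hδ.le
  have key3 : dist ((t : ℂ) * ∫ y in (0 : ℝ)..1, P ((y : ℝ) : AddCircle (1:ℝ)))
      ((t : ℂ) * ∫ y in (0 : ℝ)..1, Φ ((y : ℝ) : AddCircle (1:ℝ))) ≤ t * δ := by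
    rw [dist_eq_norm, ← mul_sub, norm_mul, Complex.norm_real, Real.norm_eq_abs, abs_of_pos ht]
    apply mul_le_mul_of_nonneg_left ?_ ht.le
    rw [← intervalIntegral.integral_sub (hint P) (hint Φ)]
    have := intervalIntegral.norm_integral_le_of_norm_le_const
      (C := δ) (f := fun y : ℝ => P ((y : ℝ) : AddCircle (1:ℝ)) - Φ ((y : ℝ) : AddCircle (1:ℝ)))
      (a := 0) (b := 1) ?_
    · simpa using this
    · intro y _
      calc ‖P ((y : ℝ) : AddCircle (1:ℝ)) - Φ ((y : ℝ) : AddCircle (1:ℝ))‖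
          = Complex.abs (Φ ((y : ℝ) : AddCircle (1:ℝ)) - P ((y : ℝ) : AddCircle (1:ℝ))) := by
            rw [Complex.norm_eq_abs, AbsoluteValue.map_sub]
        _ ≤ δ := hpt _
  have htri := dist_triangle4
    (((A n : ℂ))⁻¹ * ∑ i ∈ Finset.range (K n), Φ ((x n i : ℝ) : AddCircle (1:ℝ)))
    (((A n : ℂ))⁻¹ * ∑ i ∈ Finset.range (K n), P ((x n i : ℝ) : AddCircle (1:ℝ)))
    ((t : ℂ) * ∫ y in (0 : ℝ)..1, P ((y : ℝ) : AddCircle (1:ℝ)))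
    ((t : ℂ) * ∫ y in (0 : ℝ)..1, Φ ((y : ℝ) : AddCircle (1:ℝ)))
  have hfin : (t + 1) * δ + δ + t * δ < ε := by
    have hδε : (2 * t + 4) * δ = ε := by
      rw [hδdef]; field_simp
    nlinarith [hδ, ht]
  calc dist (((A n : ℂ))⁻¹ * ∑ i ∈ Finset.range (K n), Φ ((x n i : ℝ) : AddCircle (1:ℝ))) ((t : ℂ) * ∫ y in (0 : ℝ)..1, Φ ((y : ℝ) : AddCircle (1:ℝ))) ≤ _ := htri
    _ ≤ (t + 1) * δ + δ + t * δ := add_le_add (add_le_add key1 h1.le) key3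
    _ < ε := hfin

private lemma weylKeyReal (A : ℕ → ℝ) (K : ℕ → ℕ) (x : ℕ → ℕ → ℝ) (t : ℝ) (ht : 0 < t)
    (hApos : ∀ n, 0 < A n)
    (hx : ∀ n i, x n i ∈ Set.Ico (0 : ℝ) 1)
    (hK : Tendsto (fun n => (K n : ℝ) / A n) atTop (nhds t))
    (hfour : ∀ h : ℤ, h ≠ 0 →
      Tendsto (fun n => ((A n : ℂ))⁻¹ * ∑ i ∈ Finset.range (K n),
        Complex.exp (2 * (Real.pi : ℂ) * Complex.I * (h : ℂ) * ((x n i : ℝ) : ℂ)))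
        atTop (nhds 0))
    (G : ℝ → ℝ) (hG : ContinuousOn G (Set.Icc 0 1)) (hG01 : G 0 = G 1) :
    Tendsto (fun n => (A n)⁻¹ * ∑ i ∈ Finset.range (K n), G (x n i))
      atTop (nhds (t * ∫ y in (0 : ℝ)..1, G y)) := by
  set g : ℝ → ℂ := fun y => (G y : ℂ) with hg
  have hg01 : g 0 = g (0 + 1) := by rw [hg]; simp [hG01]
  have hgcont : ContinuousOn g (Set.Icc 0 (0 + 1)) := by
    rw [zero_add]
    exact Complex.continuous_ofReal.comp_continuousOn hG
  set Φ : C(AddCircle (1 : ℝ), ℂ) :=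
    ⟨AddCircle.liftIco 1 0 g, AddCircle.liftIco_continuous hg01 hgcont⟩ with hΦ
  have hΦcoe : ∀ y : ℝ, y ∈ Set.Ico (0:ℝ) 1 → Φ ((y : ℝ) : AddCircle (1:ℝ)) = g y := by
    intro y hy
    exact AddCircle.liftIco_zero_coe_apply (f := g) hy
  have hΦint : (∫ y in (0 : ℝ)..1, Φ ((y : ℝ) : AddCircle (1:ℝ))) = ((∫ y in (0 : ℝ)..1, G y : ℝ) : ℂ) := by
    rw [← intervalIntegral.integral_ofReal]
    apply intervalIntegral.integral_congr
    intro y hy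
    show Φ ((y : ℝ) : AddCircle (1:ℝ)) = (G y : ℂ)
    rw [Set.uIcc_of_le (by norm_num : (0:ℝ) ≤ 1)] at hy
    rcases lt_or_eq_of_le hy.2 with h1 | h1
    · exact hΦcoe y ⟨hy.1, h1⟩
    · subst h1
      have e1 : ((1 : ℝ) : AddCircle (1:ℝ)) = ((0 : ℝ) : AddCircle (1:ℝ)) := by
        rw [AddCircle.coe_period, QuotientAddGroup.mk_zero]
      rw [e1, hΦcoe 0 (by constructor <;> norm_num)]
      rw [hg]
      simp [hG01]
  have hmain := weylKey A K x t ht hApos hK hfour Φ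
  rw [hΦint] at hmain
  have hre := (Complex.continuous_re.tendsto _).comp hmain
  have : (fun n => (((A n : ℂ))⁻¹ * ∑ i ∈ Finset.range (K n), Φ ((x n i : ℝ) : AddCircle (1:ℝ))).re)
      = fun n => (A n)⁻¹ * ∑ i ∈ Finset.range (K n), G (x n i) := by
    funext n
    have e2 : ∑ i ∈ Finset.range (K n), Φ ((x n i : ℝ) : AddCircle (1:ℝ))
        = ((∑ i ∈ Finset.range (K n), G (x n i) : ℝ) : ℂ) := by
      push_cast
      exact Finset.sum_congr rfl (fun i _ => hΦcoe _ (hx n i))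
    rw [e2]
    have : ((A n : ℂ))⁻¹ = (((A n)⁻¹ : ℝ) : ℂ) := by push_cast; ring
    rw [this, ← Complex.ofReal_mul, Complex.ofReal_re]
  rw [Function.comp_def] at hre
  simp only [this] at hre
  convert hre using 2
  rw [← Complex.ofReal_mul, Complex.ofReal_re]

/-- If `L_n = b_n/a_n → L ∈ (0,∞)` with `L` irrational, then for every `m ∈ ℤ` and `t > 0`,
`(1/a_n) ∑_{j=1}^{⌊a_n t⌋} f_{m,L}({j L_n}) → t ∫_0^1 f_{m,L}(x) dx`. -/
theorem sum_fmL_tendsto_irrational_case (a b : ℕ → ℕ) (ha : StrictMono a) (hb : StrictMono b)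
    (ha0 : ∀ n, 0 < a n) (hb0 : ∀ n, 0 < b n)
    (L : ℝ) (hLpos : 0 < L) (hirr : Irrational L)
    (hconv : Tendsto (fun n => (b n : ℝ) / (a n : ℝ)) atTop (nhds L)) :
    ∀ (m : ℤ) (t : ℝ), 0 < t →
      Tendsto (fun n =>
        (1 / (a n : ℝ)) * ∑ j ∈ Finset.Icc (1 : ℤ) ⌊(a n : ℝ) * t⌋,
            fmL L m (Int.fract ((j : ℝ) * ((b n : ℝ) / (a n : ℝ)))))
        atTop (nhds (t * ∫ x in (0 : ℝ)..1, fmL L m x)) := by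
  intro m t ht
  set A : ℕ → ℝ := fun n => (a n : ℝ) with hA
  set θ : ℕ → ℝ := fun n => (b n : ℝ) / (a n : ℝ) with hθ
  set K : ℕ → ℕ := fun n => (⌊A n * t⌋).toNat with hKdef
  set x : ℕ → ℕ → ℝ := fun n i => Int.fract (((i : ℝ) + 1) * θ n) with hxdef
  set F : ℝ → ℝ := fmL L m with hF
  have hFc : Continuous F := continuous_fmL L m
  have hApos : ∀ n, 0 < A n := fun n => by
    show (0:ℝ) < (a n : ℝ); exact_mod_cast ha0 n
  have hAinf : Tendsto A atTop atTop :=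
    tendsto_natCast_atTop_atTop.comp ha.tendsto_atTop
  have hx01 : ∀ n i, x n i ∈ Set.Ico (0 : ℝ) 1 := fun n i =>
    ⟨Int.fract_nonneg _, Int.fract_lt_one _⟩
  have hKcast : ∀ n, ((K n : ℝ)) = ((⌊A n * t⌋ : ℤ) : ℝ) := by
    intro n
    rw [hKdef]
    have h0 : (0:ℤ) ≤ ⌊A n * t⌋ := Int.floor_nonneg.mpr (by positivity)
    have := Int.toNat_of_nonneg h0
    exact_mod_cast this
  have hK : Tendsto (fun n => (K n : ℝ) / A n) atTop (nhds t) := by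
    apply tendsto_of_tendsto_of_tendsto_of_le_of_le'
      (g := fun n => t - (A n)⁻¹) (h := fun _ => t)
    · have h0 : Tendsto (fun n => (A n)⁻¹) atTop (nhds 0) := hAinf.inv_tendsto_atTop
      simpa using (tendsto_const_nhds (x := t)).sub h0
    · exact tendsto_const_nhds
    · apply Eventually.of_forall
      intro n
      have hlt : t - (A n)⁻¹ < (K n : ℝ) / A n := by
        rw [hKcast n]
        have h1 : A n * t - 1 < (⌊A n * t⌋ : ℝ) := Int.sub_one_lt_floor _
        have h2 : 0 < A n := hApos n
        rw [lt_div_iff₀ h2]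
        have : (A n)⁻¹ * A n = 1 := inv_mul_cancel₀ h2.ne'
        nlinarith
      exact hlt.le
    · apply Eventually.of_forall
      intro n
      show (K n : ℝ) / A n ≤ t
      rw [hKcast n]
      have h1 : ((⌊A n * t⌋ : ℝ)) ≤ A n * t := Int.floor_le _
      have h2 : 0 < A n := hApos n
      rw [div_le_iff₀ h2]
      nlinarith
  have hfour : ∀ h : ℤ, h ≠ 0 →
      Tendsto (fun n => ((A n : ℂ))⁻¹ * ∑ i ∈ Finset.range (K n),
        Complex.exp (2 * (Real.pi : ℂ) * Complex.I * (h : ℂ) * ((x n i : ℝ) : ℂ)))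
        atTop (nhds 0) := by
    intro h hh
    exact weylSums A K θ L hApos hAinf hconv hirr h hh
  -- rewrite goal sums
  have hgoal : ∀ n, (1 / (a n : ℝ)) * ∑ j ∈ Finset.Icc (1 : ℤ) ⌊(a n : ℝ) * t⌋,
      fmL L m (Int.fract ((j : ℝ) * ((b n : ℝ) / (a n : ℝ))))
      = (A n)⁻¹ * ∑ i ∈ Finset.range (K n), F (x n i) := by
    intro n
    rw [one_div]
    congr 1
    rw [hKdef]
    show _ = ∑ i ∈ Finset.range (⌊A n * t⌋).toNat, F (x n i)
    rw [sum_Icc_one_floor ⌊A n * t⌋ (fun j => fmL L m (Int.fract ((j : ℝ) * θ n)))]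
    apply Finset.sum_congr rfl
    intro i _
    rw [hxdef, hF]
    norm_num
  refine (tendsto_congr hgoal).mpr ?_
  -- the approximation argument
  set c : ℝ := F 0 - F 1 with hc
  rw [Metric.tendsto_nhds]
  intro ε hε
  -- choose k
  obtain ⟨k, hk⟩ := exists_nat_gt (12 * (t + 1) * (|c| + 1) / ε)
  have hk2 : 12 * (t + 1) * (|c| + 1) / ε < ((k:ℝ) + 2) := by
    push_cast; have : (0:ℝ) ≤ (k:ℝ) := Nat.cast_nonneg k; linarith
  have hk2pos : (0:ℝ) < (k:ℝ) + 2 := by positivity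
  set Fk : ℝ → ℝ := fun y => F y + c * y ^ (k+1) with hFk
  set uk : ℝ → ℝ := fun y => y ^ (k+1) + (1 - y) ^ (k+1) with huk
  have hFkc : Continuous Fk := hFc.add (continuous_const.mul (continuous_pow _))
  have hukc : Continuous uk := (continuous_pow _).add ((continuous_const.sub continuous_id).pow _)
  have hFk01 : Fk 0 = Fk 1 := by simp only [hFk, hc]; simp
  have huk01 : uk 0 = uk 1 := by simp only [huk]; norm_num
  have hIpow : (∫ y in (0:ℝ)..1, y ^ (k+1)) = 1 / ((k:ℝ) + 2) := by
    rw [_root_.integral_pow]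
    have h0 : (0:ℝ)^(k+1+1) = 0 := zero_pow (by omega)
    rw [h0, one_pow]
    push_cast
    ring
  have hIpow' : (∫ y in (0:ℝ)..1, (1 - y) ^ (k+1)) = 1 / ((k:ℝ) + 2) := by
    have e := intervalIntegral.integral_comp_sub_left (a := (0:ℝ)) (b := 1)
      (fun y : ℝ => y ^ (k+1)) 1
    simp only [sub_zero, sub_self] at e
    rw [e, _root_.integral_pow]
    have h0 : (0:ℝ)^(k+1+1) = 0 := zero_pow (by omega)
    rw [h0, one_pow]
    push_cast
    ring
  have hIFk : (∫ y in (0:ℝ)..1, Fk y) = (∫ y in (0:ℝ)..1, F y) + c / ((k:ℝ) + 2) := by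
    rw [hFk]
    beta_reduce
    rw [intervalIntegral.integral_add (f := F) (g := fun y : ℝ => c * y ^ (k+1)) (hFc.intervalIntegrable 0 1)
      ((continuous_const.mul (continuous_pow (k+1))).intervalIntegrable 0 1)]
    rw [intervalIntegral.integral_const_mul, hIpow]
    ring
  have hIuk : (∫ y in (0:ℝ)..1, uk y) = 2 / ((k:ℝ) + 2) := by
    rw [huk]
    rw [intervalIntegral.integral_add ((continuous_pow (k+1)).intervalIntegrable 0 1)
      ((Continuous.intervalIntegrable (by continuity : Continuous fun y : ℝ => (1 - y) ^ (k+1)) 0 1))]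
    rw [hIpow, hIpow']
    ring
  have TF := weylKeyReal A K x t ht hApos hx01 hK hfour Fk hFkc.continuousOn hFk01
  have TU := weylKeyReal A K x t ht hApos hx01 hK hfour uk hukc.continuousOn huk01
  rw [hIFk] at TF
  rw [hIuk] at TU
  have hε4 : (0:ℝ) < ε / 4 := by positivity
  have hevF : ∀ᶠ n in atTop, dist ((A n)⁻¹ * ∑ i ∈ Finset.range (K n), Fk (x n i))
      (t * ((∫ y in (0:ℝ)..1, F y) + c / ((k:ℝ) + 2))) < ε / 4 :=
    Metric.tendsto_nhds.1 TF _ hε4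
  have hevU : ∀ᶠ n in atTop, (A n)⁻¹ * ∑ i ∈ Finset.range (K n), uk (x n i)
      < t * (2 / ((k:ℝ) + 2)) + ε / (4 * (|c| + 1)) := by
    apply TU.eventually_lt_const
    have : (0:ℝ) < ε / (4 * (|c| + 1)) := by positivity
    linarith
  filter_upwards [hevF, hevU] with n h1 h2
  -- algebra
  set Pn : ℝ := (A n)⁻¹ * ∑ i ∈ Finset.range (K n), (x n i) ^ (k+1) with hPn
  have hsplit : (A n)⁻¹ * ∑ i ∈ Finset.range (K n), F (x n i)
      = (A n)⁻¹ * ∑ i ∈ Finset.range (K n), Fk (x n i) - c * Pn := by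
    simp only [hPn, hFk]
    rw [Finset.sum_add_distrib, ← Finset.mul_sum]
    ring
  have hPn0 : 0 ≤ Pn := by
    rw [hPn]
    apply mul_nonneg (by positivity)
    apply Finset.sum_nonneg
    intro i _
    exact pow_nonneg (hx01 n i).1 _
  have hPnle : Pn ≤ (A n)⁻¹ * ∑ i ∈ Finset.range (K n), uk (x n i) := by
    rw [hPn]
    apply mul_le_mul_of_nonneg_left ?_ (by positivity)
    apply Finset.sum_le_sum
    intro i _
    show (x n i) ^ (k+1) ≤ (x n i) ^ (k+1) + (1 - x n i) ^ (k+1)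
    have : (0:ℝ) ≤ (1 - x n i) ^ (k+1) :=
      pow_nonneg (by linarith [(hx01 n i).2]) _
    linarith
  rw [Real.dist_eq, hsplit]
  rw [Real.dist_eq] at h1
  have habs : |c * Pn| ≤ |c| * ((A n)⁻¹ * ∑ i ∈ Finset.range (K n), uk (x n i)) := by
    rw [_root_.abs_mul, _root_.abs_of_nonneg hPn0]
    exact mul_le_mul_of_nonneg_left hPnle (abs_nonneg c)
  have e : (A n)⁻¹ * ∑ i ∈ Finset.range (K n), Fk (x n i) - c * Pn - t * ∫ y in (0:ℝ)..1, F y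
      = ((A n)⁻¹ * ∑ i ∈ Finset.range (K n), Fk (x n i)
          - t * ((∫ y in (0:ℝ)..1, F y) + c / ((k:ℝ) + 2)))
        - c * Pn + t * (c / ((k:ℝ) + 2)) := by ring
  rw [e]
  set S : ℝ := (A n)⁻¹ * ∑ i ∈ Finset.range (K n), Fk (x n i) with hS
  set U : ℝ := (A n)⁻¹ * ∑ i ∈ Finset.range (K n), uk (x n i) with hU
  set IF : ℝ := ∫ y in (0:ℝ)..1, F y with hIF
  set q : ℝ := (k:ℝ) + 2 with hq
  set u : ℝ := |c| with hu
  have hu0 : 0 ≤ u := hu ▸ abs_nonneg c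
  have hqε : 12 * (t + 1) * (u + 1) < q * ε := by
    rw [div_lt_iff₀ hε] at hk2
    linarith [hk2]
  clear_value S U IF q u Pn c
  -- triangle inequality
  have b1 : |S - t * (IF + c / q) - c * Pn + t * (c / q)|
      ≤ |S - t * (IF + c / q)| + |c * Pn| + t * (u / q) := by
    have t1 := abs_add_le (S - t * (IF + c / q) - c * Pn) (t * (c / q))
    have t2 := abs_sub (S - t * (IF + c / q)) (c * Pn)
    have t3 : |t * (c / q)| = t * (u / q) := by
      rw [hu, _root_.abs_mul, _root_.abs_of_pos ht, _root_.abs_div, _root_.abs_of_pos hk2pos]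
    linarith
  have d1 : u * (ε / (4 * (u + 1))) ≤ ε / 4 := by
    have e1 : u * (ε / (4 * (u + 1))) = (u * ε) / (4 * (u + 1)) := by ring
    rw [e1, div_le_div_iff₀ (by positivity) (by norm_num : (0:ℝ) < 4)]
    nlinarith only [hε.le, hu0]
  have d2 : 3 * (t * (u / q)) < ε / 4 := by
    have e2 : 3 * (t * (u / q)) = (3 * t * u) / q := by ring
    rw [e2, div_lt_div_iff₀ hk2pos (by norm_num : (0:ℝ) < 4)]
    nlinarith only [hu0, ht.le, hqε, hk2pos]
  have b2 : |c * Pn| ≤ u * (t * (2 / q) + ε / (4 * (u + 1))) := by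
    calc |c * Pn| ≤ u * U := habs
      _ ≤ u * (t * (2 / q) + ε / (4 * (u + 1))) :=
        mul_le_mul_of_nonneg_left h2.le hu0
  have b3 : u * (t * (2 / q) + ε / (4 * (u + 1)))
      = 2 * (t * (u / q)) + u * (ε / (4 * (u + 1))) := by
    field_simp
  calc |S - t * (IF + c / q) - c * Pn + t * (c / q)|
      ≤ |S - t * (IF + c / q)| + |c * Pn| + t * (u / q) := b1
    _ < ε / 4 + (2 * (t * (u / q)) + u * (ε / (4 * (u + 1)))) + t * (u / q) := by
        have := b2
        rw [b3] at this
        have hd : |S - t * (IF + c / q)| < ε / 4 := h1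
        linarith
    _ ≤ ε / 4 + (2 * (t * (u / q)) + ε / 4) + t * (u / q) := by linarith
    _ < ε := by linarith
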